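/- Let R be an F-pure Noetherian ring of characteristic p, I, J ideals with I ⊆ J, and f₁,…,f_t a minimal generating set of I. If Vol_F^J(f₁,…,f_t) = 1, then c^J(I) = t. -/

import Mathlib

open Ideal Filter MeasureTheory

/-- The `q`-th Frobenius power of an ideal: the ideal generated by `q`-th powers of its
elements (used with `q = p ^ e`). -/
def Ideal.frobPow {R : Type*} [CommRing R] (J : Ideal R) (q : ℕ) : Ideal R :=
  Ideal.span ((fun a => a ^ q) '' (J : Set R))

/-- The set `V` of exponent vectors `a ∈ ℕ^t` with `I₁^{a₁} ⋯ I_t^{a_t} ⊄ J'`. -/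
def Vnu {R : Type*} [CommRing R] {t : ℕ} (I : Fin t → Ideal R) (J' : Ideal R) :
    Set (Fin t → ℕ) :=
  {a | ¬ (∏ i, I i ^ a i) ≤ J'}

universe u v

/-- A ring homomorphism `f : R → S` is pure if for every `R`-module `M`, the natural map
`M → M ⊗_R S` (with `S` viewed as an `R`-module via `f`) is injective. -/
def RingHom.IsPureHom {R : Type u} {S : Type v} [CommRing R] [CommRing S]
    (f : R →+* S) : Prop :=
  ∀ (M : Type (max u v)) [AddCommGroup M] [Module R M],
    letI : Module R S := Module.compHom S f
    Function.Injective (fun m : M => (TensorProduct.tmul R m (1 : S) : TensorProduct R M S))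

/-- `R` is F-pure if the Frobenius endomorphism is a pure ring homomorphism. -/
def IsFPure (p : ℕ) (R : Type u) [CommRing R] [Fact p.Prime] [CharP R p] : Prop :=
  RingHom.IsPureHom (frobenius R p)

/-- The region `B^{J'}(I; q) = ⋃_{a ∈ V} ∏ᵢ [0, aᵢ/q] ⊆ ℝ^t`. -/
def Breg {R : Type*} [CommRing R] {t : ℕ} (I : Fin t → Ideal R) (J' : Ideal R) (q : ℕ) :
    Set (Fin t → ℝ) :=
  ⋃ a ∈ Vnu I J', Set.univ.pi fun i => Set.Icc (0 : ℝ) ((a i : ℝ) / (q : ℝ))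

/-- `ν_I^{J'} = max {n : I^n ⊄ J'}`. -/
noncomputable def nuF {R : Type*} [CommRing R] (I J' : Ideal R) : ℕ :=
  sSup {n : ℕ | ¬ I ^ n ≤ J'}

section helpers
variable {R : Type*} [CommRing R] {t : ℕ} (f : Fin t → R) {J : Ideal R} {q : ℕ}

lemma prod_ideal_mono {R : Type*} [CommRing R] {ι : Type*} (s : Finset ι) {F G : ι → Ideal R}
    (h : ∀ i ∈ s, F i ≤ G i) : s.prod F ≤ s.prod G := by
  classical
  induction s using Finset.induction with
  | empty => simp
  | @insert x s hx ih =>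
    rw [Finset.prod_insert hx, Finset.prod_insert hx]
    exact Ideal.mul_mono (h _ (Finset.mem_insert_self _ _))
      (ih fun i hi => h i (Finset.mem_insert_of_mem hi))

lemma pow_mem_frobPow {x : R} {a : ℕ} (hx : x ∈ J) (h : q ≤ a) : x ^ a ∈ J.frobPow q := by
  have : x ^ a = x ^ q * x ^ (a - q) := by rw [← pow_add]; congr 1; omega
  rw [this]
  exact Ideal.mul_mem_right _ _ (Ideal.subset_span ⟨x, hx, rfl⟩)

lemma natCast_ideal_le_one (n : ℕ) : (n : Ideal R) ≤ 1 := by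
  induction n with
  | zero => simp
  | succ k ih => push_cast; rw [Ideal.add_eq_sup]; exact sup_le ih le_rfl

lemma span_range_eq_sum : Ideal.span (Set.range f) = ∑ i, Ideal.span {f i} := by
  rw [Ideal.sum_eq_sup]
  apply le_antisymm
  · rw [Ideal.span_le]
    rintro x ⟨i, rfl⟩
    exact (Finset.le_sup (f := fun i => Ideal.span {f i}) (Finset.mem_univ i))
      (Ideal.subset_span rfl)
  · apply Finset.sup_le
    intro i _
    rw [Ideal.span_le]
    rintro x rfl
    exact Ideal.subset_span ⟨i, rfl⟩

lemma span_pow_le_sum (n : ℕ) :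
    Ideal.span (Set.range f) ^ n ≤
      ∑ a ∈ Finset.piAntidiag Finset.univ n, ∏ i, Ideal.span {f i} ^ a i := by
  rw [span_range_eq_sum, Finset.sum_pow_eq_sum_piAntidiag]
  apply Finset.sum_le_sum
  intro a _
  calc (Nat.multinomial Finset.univ a : Ideal R) * ∏ i, Ideal.span {f i} ^ a i
      ≤ 1 * ∏ i, Ideal.span {f i} ^ a i := Ideal.mul_mono_left (natCast_ideal_le_one _)
    _ = _ := one_mul _

/-- If some exponent is at least `q`, the monomial ideal lies in the Frobenius power. -/
lemma prod_le_frobPow (hfJ : ∀ i, f i ∈ J) {a : Fin t → ℕ} {i : Fin t} (h : q ≤ a i) :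
    (∏ j, Ideal.span {f j} ^ a j) ≤ J.frobPow q := by
  refine le_trans (Ideal.prod_le_inf.trans (Finset.inf_le (Finset.mem_univ i))) ?_
  rw [Ideal.span_singleton_pow, Ideal.span_le, Set.singleton_subset_iff]
  exact pow_mem_frobPow (hfJ i) h

lemma mem_Vnu_lt (hfJ : ∀ i, f i ∈ J)
    {a : Fin t → ℕ} (ha : a ∈ Vnu (fun i => Ideal.span {f i}) (J.frobPow q)) (i : Fin t) :
    a i < q := by
  by_contra h
  push_neg at h
  exact ha (prod_le_frobPow f hfJ h)

lemma nuSet_bdd (hfJ : ∀ i, f i ∈ J) {n : ℕ}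
    (hn : ¬ Ideal.span (Set.range f) ^ n ≤ J.frobPow q) : n ≤ t * (q - 1) := by
  by_contra h
  push_neg at h
  apply hn
  refine le_trans (span_pow_le_sum f n) ?_
  rw [Ideal.sum_eq_sup]
  apply Finset.sup_le
  intro a ha
  rw [Finset.mem_piAntidiag] at ha
  obtain ⟨hsum, -⟩ := ha
  have : ∃ i, q ≤ a i := by
    by_contra him
    push_neg at him
    have : ∑ i, a i ≤ Finset.univ.card * (q - 1) :=
      Finset.sum_le_card_nsmul _ _ _ (fun i _ => by have := him i; omega)
    simp only [Finset.card_univ, Fintype.card_fin] at this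
    rw [hsum] at this
    omega
  obtain ⟨i, hi⟩ := this
  exact prod_le_frobPow f hfJ hi

lemma nuF_le (hfJ : ∀ i, f i ∈ J) : nuF (Ideal.span (Set.range f)) (J.frobPow q) ≤ t * (q - 1) :=
  csSup_le' (fun _ hn => nuSet_bdd f hfJ hn)

lemma sum_le_nuF (hfJ : ∀ i, f i ∈ J)
    {a : Fin t → ℕ} (ha : a ∈ Vnu (fun i => Ideal.span {f i}) (J.frobPow q)) :
    ∑ i, a i ≤ nuF (Ideal.span (Set.range f)) (J.frobPow q) := by
  apply le_csSup ⟨t * (q - 1), fun n hn => nuSet_bdd f hfJ hn⟩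
  -- membership : ¬ I ^ (∑ a) ≤ J'
  intro hle
  apply ha
  refine le_trans ?_ hle
  rw [← Finset.prod_pow_eq_pow_sum]
  refine prod_ideal_mono _ (fun i _ => ?_)
  have h1 : Ideal.span {f i} ≤ Ideal.span (Set.range f) :=
    Ideal.span_mono (Set.singleton_subset_iff.mpr ⟨i, rfl⟩)
  exact Ideal.pow_right_mono h1 _

lemma ncard_Vnu_le (hfJ : ∀ i, f i ∈ J) {s : ℕ} (hsq : s ≤ q)
    (hν : nuF (Ideal.span (Set.range f)) (J.frobPow q) < t * (q - s)) :
    (Vnu (fun i => Ideal.span {f i}) (J.frobPow q)).ncard ≤ q ^ t - s ^ t := by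
  classical
  set B : Finset (Fin t → ℕ) := Fintype.piFinset fun _ => Finset.range q with hB
  set C : Finset (Fin t → ℕ) := Fintype.piFinset fun _ => Finset.Ico (q - s) q with hC
  have hCB : C ⊆ B := by
    apply Fintype.piFinset_subset
    intro i x hx
    rw [Finset.mem_Ico] at hx
    rw [Finset.mem_range]
    exact hx.2
  have hsub : Vnu (fun i => Ideal.span {f i}) (J.frobPow q) ⊆ ↑(B \ C) := by
    intro a ha
    rw [Finset.coe_sdiff]
    constructor
    · simp only [hB, Finset.mem_coe, Fintype.mem_piFinset, Finset.mem_range]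
      exact mem_Vnu_lt f hfJ ha
    · intro hCmem
      simp only [hC, Finset.mem_coe, Fintype.mem_piFinset, Finset.mem_Ico] at hCmem
      have h1 : t * (q - s) ≤ ∑ i, a i := by
        calc t * (q - s) = ∑ _i : Fin t, (q - s) := by
              simp [Finset.sum_const, Finset.card_univ]
          _ ≤ ∑ i, a i := Finset.sum_le_sum (fun i _ => (hCmem i).1)
      have h2 := sum_le_nuF f hfJ ha
      omega
  calc (Vnu (fun i => Ideal.span {f i}) (J.frobPow q)).ncard
      ≤ (↑(B \ C) : Set (Fin t → ℕ)).ncard :=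
        Set.ncard_le_ncard hsub (Set.Finite.ofFinset (B \ C) fun _ => Iff.rfl)
    _ = (B \ C).card := Set.ncard_coe_finset _
    _ = B.card - C.card := Finset.card_sdiff_of_subset hCB
    _ = q ^ t - s ^ t := by
        rw [Fintype.card_piFinset, Fintype.card_piFinset]
        simp [Nat.card_Ico, Nat.sub_sub_self hsq]

end helpers

theorem stmt15' {R : Type*} [CommRing R] (p : ℕ) [Fact p.Prime]
    {t : ℕ} (f : Fin t → R) (I J : Ideal R)
    (hIJ : I ≤ J) (hgen : Ideal.span (Set.range f) = I) (c : ℝ)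
    (hVol : Tendsto
      (fun e : ℕ => ((Vnu (fun i => Ideal.span {f i}) (J.frobPow (p ^ e))).ncard : ℝ) /
        (p : ℝ) ^ (e * t)) atTop (nhds 1))
    (hc : Tendsto (fun e : ℕ => (nuF I (J.frobPow (p ^ e)) : ℝ) / (p : ℝ) ^ e)
      atTop (nhds c)) :
    c = t := by
  have hp1 : 1 < p := (Fact.out : p.Prime).one_lt
  have hfJ : ∀ i, f i ∈ J := fun i => hIJ (hgen ▸ Ideal.subset_span ⟨i, rfl⟩)
  subst hgen
  have hqpos : ∀ e : ℕ, (0:ℝ) < (p:ℝ) ^ e := fun e => by positivity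
  have hub : ∀ e : ℕ,
      (nuF (Ideal.span (Set.range f)) (J.frobPow (p ^ e)) : ℝ) / (p:ℝ) ^ e ≤ t := by
    intro e
    rw [div_le_iff₀ (hqpos e)]
    have h := nuF_le f (q := p ^ e) hfJ
    have h2 : (nuF (Ideal.span (Set.range f)) (J.frobPow (p ^ e)) : ℝ) ≤ (t * (p^e - 1) : ℕ) :=
      Nat.cast_le.mpr h
    have hq1 : 1 ≤ p ^ e := Nat.one_le_pow _ _ (by omega)
    refine h2.trans ?_
    push_cast [Nat.cast_sub hq1]
    nlinarith [hqpos e]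
  have hct : c ≤ t := le_of_tendsto hc (Eventually.of_forall hub)
  rcases eq_or_lt_of_le hct with h | hclt
  · exact h
  exfalso
  have hc0 : 0 ≤ c := ge_of_tendsto hc (Eventually.of_forall fun e => by positivity)
  have ht : 0 < t := by
    by_contra h0
    push_neg at h0
    interval_cases t
    simp only [Nat.cast_zero] at hclt
    linarith
  have htR : (0:ℝ) < t := by exact_mod_cast ht
  obtain ⟨N, hN⟩ := exists_nat_gt ((t:ℝ) / (t - c))
  have hNpos : 0 < N := by
    have h1 : (0:ℝ) < (t:ℝ)/(t-c) := div_pos htR (by linarith)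
    have : (0:ℝ) < (N:ℝ) := lt_trans h1 hN
    exact_mod_cast this
  have hNR : (0:ℝ) < (N:ℝ) := by exact_mod_cast hNpos
  have hkey : (t:ℝ)/N < t - c := by
    rw [div_lt_iff₀ hNR]
    rw [div_lt_iff₀ (by linarith : (0:ℝ) < (t:ℝ) - c)] at hN
    linarith
  -- the shrunken boxes
  set s : ℕ → ℕ := fun e => p ^ e / N with hs
  -- s e / p^e → 1/N
  have hsl : ∀ e : ℕ, 1/(N:ℝ) - (N:ℝ)/(p:ℝ)^e ≤ (s e : ℝ) / (p:ℝ)^e := by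
    intro e
    have h1 : p ^ e < N * (p ^ e / N) + N := by
      have h1a := Nat.div_add_mod (p ^ e) N
      have h1b := Nat.mod_lt (p ^ e) hNpos
      omega
    have h1R : ((p:ℝ))^e < N * (s e : ℝ) + N := by exact_mod_cast h1
    have h2 : (p:ℝ)^e / N < (s e : ℝ) + 1 := by rw [div_lt_iff₀ hNR]; nlinarith
    have hN1 : (1:ℝ) ≤ N := by exact_mod_cast hNpos
    rw [le_div_iff₀ (hqpos e)]
    have expand : (1/(N:ℝ) - (N:ℝ)/(p:ℝ)^e) * (p:ℝ)^e = (p:ℝ)^e/N - N := by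
      field_simp
    rw [expand]
    linarith
  have hsu : ∀ e : ℕ, (s e : ℝ) / (p:ℝ)^e ≤ 1/(N:ℝ) := by
    intro e
    have h1 : s e * N ≤ p ^ e := Nat.div_mul_le_self _ _
    have h1R : (s e : ℝ) * N ≤ (p:ℝ)^e := by exact_mod_cast h1
    rw [div_le_div_iff₀ (hqpos e) hNR, one_mul]
    linarith [mul_comm (s e : ℝ) (N:ℝ)]
  have hstend : Tendsto (fun e => (s e : ℝ) / (p:ℝ)^e) atTop (nhds (1/(N:ℝ))) := by
    have hpinf : Tendsto (fun e : ℕ => (p:ℝ)^e) atTop atTop :=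
      tendsto_pow_atTop_atTop_of_one_lt (by exact_mod_cast hp1)
    have hlow : Tendsto (fun e : ℕ => 1/(N:ℝ) - (N:ℝ)/(p:ℝ)^e) atTop (nhds (1/(N:ℝ))) := by
      have : Tendsto (fun e : ℕ => (N:ℝ)/(p:ℝ)^e) atTop (nhds 0) :=
        Tendsto.div_atTop tendsto_const_nhds hpinf
      simpa using (tendsto_const_nhds (x := 1/(N:ℝ))).sub this
    exact tendsto_of_tendsto_of_tendsto_of_le_of_le hlow tendsto_const_nhds hsl hsu
  have hgt : Tendsto (fun e => ((s e : ℝ) / (p:ℝ)^e) ^ t) atTop (nhds ((1/(N:ℝ))^t)) :=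
    hstend.pow t
  -- eventual inequality
  have hev : ∀ᶠ e in atTop,
      ((Vnu (fun i => Ideal.span {f i}) (J.frobPow (p ^ e))).ncard : ℝ) / (p : ℝ) ^ (e * t)
        + ((s e : ℝ) / (p:ℝ)^e) ^ t ≤ 1 := by
    have hlt : ∀ᶠ e in atTop,
        (nuF (Ideal.span (Set.range f)) (J.frobPow (p ^ e)) : ℝ) / (p:ℝ) ^ e
          < (t:ℝ) - (t:ℝ)/N := by
      apply hc.eventually_lt_const
      linarith
    filter_upwards [hlt, eventually_ge_atTop N] with e hν' hNe
    have hNe' : N ≤ p ^ e := hNe.trans (Nat.le_of_lt (Nat.lt_pow_self (n := e) hp1))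
    have hsq : s e ≤ p ^ e := Nat.div_le_self _ _
    have hs1 : 1 ≤ s e := (Nat.one_le_div_iff hNpos).mpr hNe'
    have hcast : (s e : ℝ) ≤ (p:ℝ)^e / N := by
      have h1 : s e * N ≤ p ^ e := Nat.div_mul_le_self _ _
      have h1R : (s e : ℝ) * N ≤ (p:ℝ)^e := by exact_mod_cast h1
      rw [le_div_iff₀ hNR]
      exact h1R
    have hν : nuF (Ideal.span (Set.range f)) (J.frobPow (p ^ e)) < t * (p ^ e - s e) := by
      rw [← Nat.cast_lt (α := ℝ)]
      push_cast [Nat.cast_sub hsq]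
      rw [div_lt_iff₀ (hqpos e)] at hν'
      have heq : (t:ℝ)/N * (p:ℝ)^e = (t:ℝ) * ((p:ℝ)^e / N) := by ring
      have h3 := mul_le_mul_of_nonneg_left hcast htR.le
      nlinarith [hν', heq, h3]
    have hcount := ncard_Vnu_le f hfJ hsq hν
    have hst : s e ^ t ≤ (p ^ e) ^ t := Nat.pow_le_pow_left hsq t
    have hcR : ((Vnu (fun i => Ideal.span {f i}) (J.frobPow (p ^ e))).ncard : ℝ)
        ≤ ((p:ℝ)^e)^t - ((s e : ℝ))^t := by
      have := (Nat.cast_le (α := ℝ)).mpr hcount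
      rw [Nat.cast_sub hst] at this
      push_cast at this
      exact this
    have hqt : (0:ℝ) < ((p:ℝ)^e)^t := by positivity
    rw [pow_mul]
    rw [div_pow, ← add_div, div_le_one hqt]
    linarith
  have hsum := hVol.add hgt
  have hle := le_of_tendsto hsum hev
  have hpos : (0:ℝ) < (1/(N:ℝ))^t := by positivity
  linarith


/-- For `R` F-pure, `I ⊆ J`, and `f₁,…,f_t` minimal generators of `I`:
if `Vol_F^J(f₁,…,f_t) = 1` then `c^J(I) = t`. -/
theorem stmt15 {R : Type u} [CommRing R] [IsNoetherianRing R] (p : ℕ) [Fact p.Prime]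
    [CharP R p] (hFP : IsFPure p R) {t : ℕ} (f : Fin t → R) (I J : Ideal R)
    (hIJ : I ≤ J) (hgen : Ideal.span (Set.range f) = I)
    (hmin : ∀ s : Finset R, Ideal.span (s : Set R) = I → t ≤ s.card) (c : ℝ)
    (hVol : Tendsto
      (fun e : ℕ => ((Vnu (fun i => Ideal.span {f i}) (J.frobPow (p ^ e))).ncard : ℝ) /
        (p : ℝ) ^ (e * t)) atTop (nhds 1))
    (hc : Tendsto (fun e : ℕ => (nuF I (J.frobPow (p ^ e)) : ℝ) / (p : ℝ) ^ e)
      atTop (nhds c)) :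
    c = t := by
  exact stmt15' p f I J hIJ hgen c hVol hc
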